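/- Every cubic polynomial in two real variables is affinely critical: for every polynomial f : ℝ² → ℝ of total degree at most 3, the set {(x,y) ∈ ℝ² : ∇f(x,y) = 0} of critical points of f is a finite union of affine subspaces of ℝ² (i.e., there exist finitely many affine subspaces of ℝ², each being all of ℝ², a line, a point, or empty, whose union equals the critical set). -/

import Mathlib

set_option maxHeartbeats 1600000

namespace Stmt1Aux

abbrev Pt := Fin 2 → ℝ






def decomp (Z : Set Pt) : Prop :=
  ∃ (k : ℕ) (A : Fin k → AffineSubspace ℝ Pt), Z = ⋃ i, (A i : Set Pt)

lemma decomp_sub (s : AffineSubspace ℝ Pt) : decomp (s : Set Pt) :=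
  ⟨1, fun _ => s, by rw [Set.iUnion_const]⟩

lemma decomp_empty : decomp (∅ : Set Pt) := ⟨0, fun i => i.elim0, by simp⟩

lemma decomp_union {Z₁ Z₂ : Set Pt} (h₁ : decomp Z₁) (h₂ : decomp Z₂) :
    decomp (Z₁ ∪ Z₂) := by
  obtain ⟨k₁, A₁, rfl⟩ := h₁
  obtain ⟨k₂, A₂, rfl⟩ := h₂
  refine ⟨k₁ + k₂, fun i => if h : (i : ℕ) < k₁ then A₁ ⟨i, h⟩
    else A₂ ⟨(i : ℕ) - k₁, by omega⟩, ?_⟩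
  ext v
  simp only [Set.mem_union, Set.mem_iUnion, AffineSubspace.mem_coe]
  constructor
  · rintro (⟨i, hi⟩ | ⟨i, hi⟩)
    · exact ⟨⟨i, by omega⟩, by simpa using hi⟩
    · refine ⟨⟨k₁ + i, by omega⟩, ?_⟩
      have h1 : ¬ ((⟨k₁ + (i : ℕ), by omega⟩ : Fin (k₁ + k₂)) : ℕ) < k₁ := by simp
      rw [dif_neg h1]
      have : (⟨k₁ + (i : ℕ) - k₁, by omega⟩ : Fin k₂) = i := by
        apply Fin.ext; simp
      rw [this]; exact hi
  · rintro ⟨i, hi⟩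
    by_cases h : (i : ℕ) < k₁
    · rw [dif_pos h] at hi; exact Or.inl ⟨_, hi⟩
    · rw [dif_neg h] at hi; exact Or.inr ⟨_, hi⟩

lemma decomp_point (p : Pt) : decomp ({p} : Set Pt) := by
  have h : ({p} : Set Pt) = (AffineSubspace.mk' p (⊥ : Submodule ℝ Pt) : Set Pt) := by
    ext q
    simp only [AffineSubspace.mem_coe, AffineSubspace.mem_mk',
      Submodule.mem_bot, Set.mem_singleton_iff, vsub_eq_zero_iff_eq]
  rw [h]; exact decomp_sub _

lemma decomp_finite {Z : Set Pt} (h : Z.Finite) : decomp Z := by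
  refine Set.Finite.induction_on (motive := fun s _ => decomp s) Z h decomp_empty ?_
  intro a s _ _ ih
  rw [Set.insert_eq]
  exact decomp_union (decomp_point _) ih

noncomputable def lform (a b : ℝ) : Pt →ₗ[ℝ] ℝ := a • LinearMap.proj 0 + b • LinearMap.proj 1

@[simp] lemma lform_apply (a b : ℝ) (v : Pt) : lform a b v = a * v 0 + b * v 1 := rfl

lemma decomp_line (a b c : ℝ) : decomp {v : Pt | a * v 0 + b * v 1 = c} := by
  have h : {v : Pt | a * v 0 + b * v 1 = c} =
      ((AffineSubspace.comap (lform a b).toAffineMap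
        (AffineSubspace.mk' c (⊥ : Submodule ℝ ℝ))) : Set Pt) := by
    ext v
    simp [AffineSubspace.coe_comap, AffineSubspace.mem_mk', sub_eq_zero]
  rw [h]; exact decomp_sub _

lemma decomp_preimage (φ : Pt →ᵃ[ℝ] Pt) {Z : Set Pt} (h : decomp Z) :
    decomp (φ ⁻¹' Z) := by
  obtain ⟨k, A, rfl⟩ := h
  exact ⟨k, fun i => (A i).comap φ, by simp [AffineSubspace.coe_comap, Set.preimage_iUnion]⟩


lemma decomp_congr {Z Z2 : Set Pt} (h : Z = Z2) (hd : decomp Z2) : decomp Z := h ▸ hd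

open Polynomial


open Polynomial

lemma quad_finite (a b c : ℝ) (ha : a ≠ 0) :
    {x : ℝ | a * x ^ 2 + b * x + c = 0}.Finite := by
  have hP : (C a * X ^ 2 + C b * X + C c : ℝ[X]) ≠ 0 := by
    intro h
    have h2 := congrArg (fun p => Polynomial.coeff p 2) h
    simp [coeff_C] at h2
    exact ha h2
  refine (Polynomial.finite_setOf_isRoot hP).subset ?_
  intro x hx
  simp only [Set.mem_setOf_eq, IsRoot, eval_add, eval_mul, eval_pow, eval_C, eval_X]
  linear_combination hx.out

lemma quartic_finite (a4 a3 a2 a1 a0 : ℝ)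
    (h : ¬(a4 = 0 ∧ a3 = 0 ∧ a2 = 0 ∧ a1 = 0 ∧ a0 = 0)) :
    {y : ℝ | a4 * y ^ 4 + a3 * y ^ 3 + a2 * y ^ 2 + a1 * y + a0 = 0}.Finite := by
  have hP : (C a4 * X ^ 4 + C a3 * X ^ 3 + C a2 * X ^ 2 + C a1 * X + C a0 : ℝ[X]) ≠ 0 := by
    intro hz
    apply h
    have h4 := congrArg (fun p => Polynomial.coeff p 4) hz
    have h3 := congrArg (fun p => Polynomial.coeff p 3) hz
    have h2 := congrArg (fun p => Polynomial.coeff p 2) hz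
    have h1 := congrArg (fun p => Polynomial.coeff p 1) hz
    have h0 := congrArg (fun p => Polynomial.coeff p 0) hz
    simp [coeff_C] at h4 h3 h2 h1 h0
    exact ⟨h4, h3, h2, h1, h0⟩
  refine (Polynomial.finite_setOf_isRoot hP).subset ?_
  intro x hx
  simp only [Set.mem_setOf_eq, IsRoot, eval_add, eval_mul, eval_pow, eval_C, eval_X]
  linear_combination hx.out

lemma quad_all (a b c y₀ : ℝ) (h : ∀ y : ℝ, y ≠ y₀ → a * y ^ 2 + b * y + c = 0) :
    ∀ y : ℝ, a * y ^ 2 + b * y + c = 0 := by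
  have hP : (C a * X ^ 2 + C b * X + C c : ℝ[X]) = 0 := by
    apply Polynomial.eq_zero_of_infinite_isRoot
    have hinf : ({y₀}ᶜ : Set ℝ).Infinite := (Set.finite_singleton y₀).infinite_compl
    refine hinf.mono ?_
    intro y hy
    simp only [Set.mem_setOf_eq, IsRoot, eval_add, eval_mul, eval_pow, eval_C, eval_X]
    linear_combination h y hy
  intro y
  have := congrArg (fun p => Polynomial.eval y p) hP
  simpa using this

lemma cubic_exists (a b c d : ℝ) (h : ¬(a = 0 ∧ b = 0 ∧ c = 0 ∧ d = 0)) :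
    ∃ t : ℝ, a + b * t + c * t ^ 2 + d * t ^ 3 ≠ 0 := by
  by_contra hc
  push_neg at hc
  apply h
  have hP : (C a + C b * X + C c * X ^ 2 + C d * X ^ 3 : ℝ[X]) = 0 := by
    apply Polynomial.funext
    intro r
    simp only [eval_add, eval_mul, eval_pow, eval_C, eval_X, eval_zero]
    linear_combination hc r
  have h0 := congrArg (fun p => Polynomial.coeff p 0) hP
  have h1 := congrArg (fun p => Polynomial.coeff p 1) hP
  have h2 := congrArg (fun p => Polynomial.coeff p 2) hP
  have h3 := congrArg (fun p => Polynomial.coeff p 3) hP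
  simp [coeff_C] at h0 h1 h2 h3
  exact ⟨h0, h1, h2, h3⟩

lemma sq_cases {s d : ℝ} (h : s ^ 2 = d) : s = Real.sqrt d ∨ s = -Real.sqrt d := by
  have hd : 0 ≤ d := h ▸ sq_nonneg s
  have hs := Real.sq_sqrt hd
  have hf : (s - Real.sqrt d) * (s + Real.sqrt d) = 0 := by linear_combination h - hs
  rcases mul_eq_zero.1 hf with h' | h'
  · exact Or.inl (by linarith)
  · exact Or.inr (by linarith)




lemma fiber_eq (P : ℝ → ℝ → Prop) (y : ℝ) :
    {v : Pt | v 1 = y ∧ P (v 0) y} = (fun x => ![x, y]) '' {x | P x y} := by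
  ext v
  constructor
  · rintro ⟨h1, h2⟩
    refine ⟨v 0, h2, ?_⟩
    funext i
    fin_cases i
    · simp
    · simp [h1]
  · rintro ⟨x, hx, rfl⟩
    exact ⟨by simp, by simpa using hx⟩

lemma pt_finite {Q : ℝ → Prop} {P : ℝ → ℝ → Prop} (hY : {y | Q y}.Finite)
    (hX : ∀ y, Q y → {x | P x y}.Finite) :
    {v : Pt | Q (v 1) ∧ P (v 0) (v 1)}.Finite := by
  have hsub : {v : Pt | Q (v 1) ∧ P (v 0) (v 1)} ⊆
      ⋃ y ∈ {y | Q y}, {v : Pt | v 1 = y ∧ P (v 0) y} := by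
    rintro v ⟨h1, h2⟩
    exact Set.mem_biUnion h1 ⟨rfl, h2⟩
  refine (Set.Finite.biUnion hY ?_).subset hsub
  intro y hy
  rw [fiber_eq]
  exact (hX y hy).image _

lemma TfromGh (A b1 b0 c2 c1 c0 a1 a0 B2 B1 B0 x y : ℝ)
    (hG : A*x^2 + (b1*y+b0)*x + (c2*y^2+c1*y+c0) = 0)
    (hh : (a1*y+a0)*x + (B2*y^2+B1*y+B0) = 0) :
    A*(B2*y^2+B1*y+B0)^2 - (b1*y+b0)*((a1*y+a0)*(B2*y^2+B1*y+B0))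
      + (c2*y^2+c1*y+c0)*(a1*y+a0)^2 = 0 := by
  linear_combination (a1*y+a0)^2 * hG
    + (A*((B2*y^2+B1*y+B0) - (a1*y+a0)*x) - (b1*y+b0)*(a1*y+a0)) * hh

lemma Tcoeff (A b1 b0 c2 c1 c0 a1 a0 B2 B1 B0 y : ℝ) :
    A*(B2*y^2+B1*y+B0)^2 - (b1*y+b0)*((a1*y+a0)*(B2*y^2+B1*y+B0))
      + (c2*y^2+c1*y+c0)*(a1*y+a0)^2
    = (A*B2*B2 - B2*a1*b1 + a1*a1*c2)*y^4
      + (2*A*B1*B2 - B1*a1*b1 - B2*a0*b1 - B2*a1*b0 + 2*a0*a1*c2 + a1*a1*c1)*y^3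
      + (2*A*B0*B2 + A*B1*B1 - B0*a1*b1 - B1*a0*b1 - B1*a1*b0 - B2*a0*b0
          + a0*a0*c2 + 2*a0*a1*c1 + a1*a1*c0)*y^2
      + (2*A*B0*B1 - B0*a0*b1 - B0*a1*b0 - B1*a0*b0 + a0*a0*c1 + 2*a0*a1*c0)*y
      + (A*B0*B0 - B0*a0*b0 + a0*a0*c0) := by
  ring


lemma htilde (q30 q21 q12 q03 q20 q11 q02 q10 q01 x y : ℝ)
    (hG : 3*q30*x^2 + 2*q21*x*y + q12*y^2 + 2*q20*x + q11*y + q10 = 0) (hH : q21*x^2 + 2*q12*x*y + 3*q03*y^2 + q11*x + 2*q02*y + q01 = 0) :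
    ((6*q30*q12 - 2*q21^2)*y+(3*q30*q11 - 2*q21*q20))*x + ((9*q30*q03 - q21*q12)*y^2+(6*q30*q02 - q21*q11)*y+(3*q30*q01 - q21*q10)) = 0 := by
  linear_combination 3*q30*hH - q21*hG

lemma Hfrom (q30 q21 q12 q03 q20 q11 q02 q10 q01 x y : ℝ) (hA : q30 ≠ 0)
    (hG : 3*q30*x^2 + 2*q21*x*y + q12*y^2 + 2*q20*x + q11*y + q10 = 0) (hh : ((6*q30*q12 - 2*q21^2)*y+(3*q30*q11 - 2*q21*q20))*x + ((9*q30*q03 - q21*q12)*y^2+(6*q30*q02 - q21*q11)*y+(3*q30*q01 - q21*q10)) = 0) :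
    q21*x^2 + 2*q12*x*y + 3*q03*y^2 + q11*x + 2*q02*y + q01 = 0 := by
  have h3 : 3*q30*(q21*x^2 + 2*q12*x*y + 3*q03*y^2 + q11*x + 2*q02*y + q01) = 0 := by linear_combination q21*hG + hh
  rcases mul_eq_zero.1 h3 with h | h
  · exact absurd (by linarith : q30 = 0) hA
  · exact h

lemma B2_zero (A b1 b0 c2 c1 c0 a1 a0 B2 B1 B0 : ℝ) (hA : A ≠ 0) (ha1 : a1 = 0)
    (ht4 : A*B2*B2 - B2*a1*b1 + a1*a1*c2 = 0) : B2 = 0 := by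
  subst ha1
  have h2 : B2^2 = 0 := by
    rcases mul_eq_zero.1 (show A*(B2^2) = 0 by linear_combination ht4) with h | h
    · exact absurd h hA
    · exact h
  exact pow_eq_zero_iff two_ne_zero |>.1 h2

lemma betas_zero (A b1 b0 c2 c1 c0 a1 a0 B2 B1 B0 : ℝ) (hA : A ≠ 0)
    (ha1 : a1 = 0) (ha0 : a0 = 0)
    (hT : ∀ y : ℝ, A*(B2*y^2+B1*y+B0)^2 - (b1*y+b0)*((a1*y+a0)*(B2*y^2+B1*y+B0))
      + (c2*y^2+c1*y+c0)*(a1*y+a0)^2 = 0) :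
    B2 = 0 ∧ B1 = 0 ∧ B0 = 0 := by
  subst ha1 ha0
  have hz : ∀ y : ℝ, B2*y^2+B1*y+B0 = 0 := by
    intro y
    have h := hT y
    have h2 : A*((B2*y^2+B1*y+B0)^2) = 0 := by linear_combination h
    rcases mul_eq_zero.1 h2 with h3 | h3
    · exact absurd h3 hA
    · exact pow_eq_zero_iff two_ne_zero |>.1 h3
  have h0 := hz 0
  have hp := hz 1
  have hm := hz (-1)
  refine ⟨by linarith, by linarith, by linarith⟩

lemma Wm_of_T (A b1 b0 c2 c1 c0 a1 a0 B2 B1 B0 : ℝ) (ha1 : a1 = 0) (hB2 : B2 = 0)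
    (hT : ∀ y : ℝ, A*(B2*y^2+B1*y+B0)^2 - (b1*y+b0)*((a1*y+a0)*(B2*y^2+B1*y+B0))
      + (c2*y^2+c1*y+c0)*(a1*y+a0)^2 = 0) :
    ∀ y : ℝ, A*(B1*y+B0)^2 - (b1*y+b0)*(a0*(B1*y+B0)) + (c2*y^2+c1*y+c0)*a0^2 = 0 := by
  subst ha1 hB2
  intro y
  linear_combination hT y

lemma E_of_T (A b1 b0 c2 c1 c0 a1 a0 B2 B1 B0 : ℝ) (hA : A ≠ 0) (ha1 : a1 ≠ 0)
    (hT : ∀ y : ℝ, A*(B2*y^2+B1*y+B0)^2 - (b1*y+b0)*((a1*y+a0)*(B2*y^2+B1*y+B0))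
      + (c2*y^2+c1*y+c0)*(a1*y+a0)^2 = 0) :
    B2*a0^2 - B1*a1*a0 + B0*a1^2 = 0 := by
  have hz : a1*(-(a0/a1)) + a0 = 0 := by
    field_simp
    ring
  have h := hT (-(a0/a1))
  have h3 : A * (B2*(-(a0/a1))^2 + B1*(-(a0/a1)) + B0)^2 = 0 := by
    linear_combination h + ((b1*(-(a0/a1))+b0)*(B2*(-(a0/a1))^2+B1*(-(a0/a1))+B0)
      - (c2*(-(a0/a1))^2+c1*(-(a0/a1))+c0)*(a1*(-(a0/a1))+a0))*hz
  have h4 : B2*(-(a0/a1))^2 + B1*(-(a0/a1)) + B0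
      = (B2*a0^2 - B1*a1*a0 + B0*a1^2)/a1^2 := by
    field_simp
    ring
  rw [h4] at h3
  rcases mul_eq_zero.1 h3 with h5 | h5
  · exact absurd h5 hA
  · have h6 := pow_eq_zero_iff two_ne_zero |>.1 h5
    have h7 := div_eq_zero_iff.1 h6
    rcases h7 with h7 | h7
    · exact h7
    · exact absurd (pow_eq_zero_iff two_ne_zero |>.1 h7) ha1

lemma mainA (q30 q21 q12 q03 q20 q11 q02 q10 q01 : ℝ) (hA : q30 ≠ 0) :
    decomp {v : Pt | 3*q30*(v 0)^2 + 2*q21*(v 0)*(v 1) + q12*(v 1)^2 + 2*q20*(v 0) + q11*(v 1) + q10 = 0 ∧ q21*(v 0)^2 + 2*q12*(v 0)*(v 1) + 3*q03*(v 1)^2 + q11*(v 0) + 2*q02*(v 1) + q01 = 0} := by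
  have hA3 : (3:ℝ)*q30 ≠ 0 := mul_ne_zero (by norm_num) hA
  have hA3' : (3*q30) ≠ 0 := hA3
  by_cases hT : ((3*q30)*(9*q30*q03 - q21*q12)*(9*q30*q03 - q21*q12) - (9*q30*q03 - q21*q12)*(6*q30*q12 - 2*q21^2)*(2*q21) + (6*q30*q12 - 2*q21^2)*(6*q30*q12 - 2*q21^2)*q12) = 0 ∧ (2*(3*q30)*(6*q30*q02 - q21*q11)*(9*q30*q03 - q21*q12) - (6*q30*q02 - q21*q11)*(6*q30*q12 - 2*q21^2)*(2*q21) - (9*q30*q03 - q21*q12)*(3*q30*q11 - 2*q21*q20)*(2*q21) - (9*q30*q03 - q21*q12)*(6*q30*q12 - 2*q21^2)*(2*q20) + 2*(3*q30*q11 - 2*q21*q20)*(6*q30*q12 - 2*q21^2)*q12 + (6*q30*q12 - 2*q21^2)*(6*q30*q12 - 2*q21^2)*q11) = 0 ∧ (2*(3*q30)*(3*q30*q01 - q21*q10)*(9*q30*q03 - q21*q12) + (3*q30)*(6*q30*q02 - q21*q11)*(6*q30*q02 - q21*q11) - (3*q30*q01 - q21*q10)*(6*q30*q12 - 2*q21^2)*(2*q21)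 - (6*q30*q02 - q21*q11)*(3*q30*q11 - 2*q21*q20)*(2*q21) - (6*q30*q02 - q21*q11)*(6*q30*q12 - 2*q21^2)*(2*q20) - (9*q30*q03 - q21*q12)*(3*q30*q11 - 2*q21*q20)*(2*q20) + (3*q30*q11 - 2*q21*q20)*(3*q30*q11 - 2*q21*q20)*q12 + 2*(3*q30*q11 - 2*q21*q20)*(6*q30*q12 - 2*q21^2)*q11 + (6*q30*q12 - 2*q21^2)*(6*q30*q12 - 2*q21^2)*q10) = 0 ∧ (2*(3*q30)*(3*q30*q01 - q21*q10)*(6*q30*q02 - q21*q11) - (3*q30*q01 - q21*q10)*(3*q30*q11 - 2*q21*q20)*(2*q21) - (3*q30*q01 - q21*q10)*(6*q30*q12 - 2*q21^2)*(2*q20) - (6*q30*q02 - q21*q11)*(3*q30*q11 - 2*q21*q20)*(2*q20) + (3*q30*q11 - 2*q21*q20)*(3*q30*q11 - 2*q21*q20)*q11 + 2*(3*q30*q11 - 2*q21*q20)*(6*q30*q12 - 2*q21^2)*q10) = 0 ∧ ((3*q30)*(3*q30*q01 - q21*q10)*(3*q30*q01 - q21*q10) - (3*q30*q01 - q21*q10)*(3*q30*q11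 - 2*q21*q20)*(2*q20) + (3*q30*q11 - 2*q21*q20)*(3*q30*q11 - 2*q21*q20)*q10) = 0
  · -- degenerate resultant: T ≡ 0
    obtain ⟨t4, t3, t2, t1, t0⟩ := hT
    have hTpt : ∀ y : ℝ, (3*q30)*((9*q30*q03 - q21*q12)*y^2+(6*q30*q02 - q21*q11)*y+(3*q30*q01 - q21*q10))^2 - ((2*q21)*y+(2*q20))*(((6*q30*q12 - 2*q21^2)*y+(3*q30*q11 - 2*q21*q20))*((9*q30*q03 - q21*q12)*y^2+(6*q30*q02 - q21*q11)*y+(3*q30*q01 - q21*q10))) + (q12*y^2+q11*y+q10)*((6*q30*q12 - 2*q21^2)*y+(3*q30*q11 - 2*q21*q20))^2 = 0 := by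
      intro y
      have h := Tcoeff (3*q30) (2*q21) (2*q20) q12 q11 q10 (6*q30*q12 - 2*q21^2) (3*q30*q11 - 2*q21*q20) (9*q30*q03 - q21*q12) (6*q30*q02 - q21*q11) (3*q30*q01 - q21*q10) y
      linear_combination h + y^4*t4 + y^3*t3 + y^2*t2 + y*t1 + t0
    by_cases ha : (6*q30*q12 - 2*q21^2) = 0 ∧ (3*q30*q11 - 2*q21*q20) = 0
    · -- proportional case: G is a quadratic in one linear form
      obtain ⟨ha1, ha0⟩ := ha
      obtain ⟨hb2, hb1, hb0⟩ := betas_zero (3*q30) (2*q21) (2*q20) q12 q11 q10 (6*q30*q12 - 2*q21^2) (3*q30*q11 - 2*q21*q20) (9*q30*q03 - q21*q12) (6*q30*q02 - q21*q11) (3*q30*q01 - q21*q10) hA3' ha1 ha0 hTpt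
      by_cases hD : 0 ≤ q20^2 - 3*q30*q10
      · have hsq := Real.sq_sqrt hD
        apply decomp_congr (Z2 :=
          {v : Pt | 3*q30 * v 0 + q21 * v 1 = -q20 + Real.sqrt (q20^2 - 3*q30*q10)} ∪
          {v : Pt | 3*q30 * v 0 + q21 * v 1 = -q20 - Real.sqrt (q20^2 - 3*q30*q10)})
        · ext v
          simp only [Set.mem_setOf_eq, Set.mem_union]
          constructor
          · rintro ⟨hG, hH⟩
            have hw : (3*q30*(v 0) + q21*(v 1) + q20)^2 = q20^2 - 3*q30*q10 := by
              linear_combination 3*q30*hG - ((v 1)^2/2)*ha1 - (v 1)*ha0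
            rcases sq_cases hw with h | h
            · left; linarith
            · right; linarith
          · intro h
            have hw : (3*q30*(v 0) + q21*(v 1) + q20)^2 = q20^2 - 3*q30*q10 := by
              rcases h with h | h
              · rw [show 3*q30*(v 0) + q21*(v 1) + q20 = Real.sqrt (q20^2 - 3*q30*q10) by linarith]
                exact hsq
              · rw [show 3*q30*(v 0) + q21*(v 1) + q20 = -Real.sqrt (q20^2 - 3*q30*q10) by
                  linarith]
                rw [neg_pow]
                simp [hsq]
            have hG : 3*q30*(v 0)^2 + 2*q21*(v 0)*(v 1) + q12*(v 1)^2 + 2*q20*(v 0) + q11*(v 1) + q10 = 0 := by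
              have h3 : 3*q30*(3*q30*(v 0)^2 + 2*q21*(v 0)*(v 1) + q12*(v 1)^2 + 2*q20*(v 0) + q11*(v 1) + q10) = 0 := by
                linear_combination hw + ((v 1)^2/2)*ha1 + (v 1)*ha0
              rcases mul_eq_zero.1 h3 with h4 | h4
              · exact absurd (by linarith : q30 = 0) hA
              · exact h4
            refine ⟨hG, Hfrom q30 q21 q12 q03 q20 q11 q02 q10 q01 (v 0) (v 1) hA hG ?_⟩
            linear_combination (v 0)*(v 1)*ha1 + (v 0)*ha0 + (v 1)^2*hb2 + (v 1)*hb1 + hb0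
        · exact decomp_union (decomp_line _ _ _) (decomp_line _ _ _)
      · apply decomp_congr (Z2 := (∅ : Set Pt))
        · ext v
          simp only [Set.mem_setOf_eq, Set.mem_empty_iff_false, iff_false, not_and]
          intro hG hH
          have hw : (3*q30*(v 0) + q21*(v 1) + q20)^2 = q20^2 - 3*q30*q10 := by
            linear_combination 3*q30*hG - ((v 1)^2/2)*ha1 - (v 1)*ha0
          exact hD (hw ▸ sq_nonneg _)
        · exact decomp_empty
    · -- gcd is linear (or empty): line plus finitely many points
      by_cases ha1 : (6*q30*q12 - 2*q21^2) = 0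
      · -- a0 ≠ 0 : single line
        have ha0 : (3*q30*q11 - 2*q21*q20) ≠ 0 := fun h => ha ⟨ha1, h⟩
        have hb2 : (9*q30*q03 - q21*q12) = 0 := B2_zero (3*q30) (2*q21) (2*q20) q12 q11 q10 (6*q30*q12 - 2*q21^2) (3*q30*q11 - 2*q21*q20) (9*q30*q03 - q21*q12) (6*q30*q02 - q21*q11) (3*q30*q01 - q21*q10) hA3' ha1 t4
        have hWm := Wm_of_T (3*q30) (2*q21) (2*q20) q12 q11 q10 (6*q30*q12 - 2*q21^2) (3*q30*q11 - 2*q21*q20) (9*q30*q03 - q21*q12) (6*q30*q02 - q21*q11) (3*q30*q01 - q21*q10) ha1 hb2 hTpt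
        apply decomp_congr (Z2 := {v : Pt | (3*q30*q11 - 2*q21*q20) * v 0 + (6*q30*q02 - q21*q11) * v 1 = -(3*q30*q01 - q21*q10)})
        · ext v
          simp only [Set.mem_setOf_eq]
          constructor
          · rintro ⟨hG, hH⟩
            have hh := htilde q30 q21 q12 q03 q20 q11 q02 q10 q01 (v 0) (v 1) hG hH
            have : (3*q30*q11 - 2*q21*q20)*(v 0) + ((6*q30*q02 - q21*q11)*(v 1) + (3*q30*q01 - q21*q10)) = 0 := by
              linear_combination hh - ((v 0)*(v 1))*ha1 - ((v 1)^2)*hb2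
            linarith
          · intro h
            have hx : (3*q30*q11 - 2*q21*q20)*(v 0) + ((6*q30*q02 - q21*q11)*(v 1)+(3*q30*q01 - q21*q10)) = 0 := by linarith
            have hG : 3*q30*(v 0)^2 + 2*q21*(v 0)*(v 1) + q12*(v 1)^2 + 2*q20*(v 0) + q11*(v 1) + q10 = 0 := by
              have h3 : (3*q30*q11 - 2*q21*q20)^2*(3*q30*(v 0)^2 + 2*q21*(v 0)*(v 1) + q12*(v 1)^2 + 2*q20*(v 0) + q11*(v 1) + q10) = 0 := by
                linear_combination hWm (v 1) + ((3*q30)*((3*q30*q11 - 2*q21*q20)*(v 0) - ((6*q30*q02 - q21*q11)*(v 1)+(3*q30*q01 - q21*q10)))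
                  + ((2*q21)*(v 1)+(2*q20))*(3*q30*q11 - 2*q21*q20)) * hx
              rcases mul_eq_zero.1 h3 with h4 | h4
              · exact absurd (pow_eq_zero_iff two_ne_zero |>.1 h4) ha0
              · exact h4
            refine ⟨hG, Hfrom q30 q21 q12 q03 q20 q11 q02 q10 q01 (v 0) (v 1) hA hG ?_⟩
            linear_combination hx + ((v 0)*(v 1))*ha1 + ((v 1)^2)*hb2
        · exact decomp_line _ _ _
      · -- a1 ≠ 0 : a line plus at most two points
        have hE := E_of_T (3*q30) (2*q21) (2*q20) q12 q11 q10 (6*q30*q12 - 2*q21^2) (3*q30*q11 - 2*q21*q20) (9*q30*q03 - q21*q12) (6*q30*q02 - q21*q11) (3*q30*q01 - q21*q10) hA3' ha1 hTpt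
        have hprod : ∀ y : ℝ, ((6*q30*q12 - 2*q21^2)*y+(3*q30*q11 - 2*q21*q20))^2 * ((3*q30)*(((9*q30*q03 - q21*q12)*(6*q30*q12 - 2*q21^2)*y + ((6*q30*q02 - q21*q11)*(6*q30*q12 - 2*q21^2) - (9*q30*q03 - q21*q12)*(3*q30*q11 - 2*q21*q20))))^2
            - ((2*q21)*y+(2*q20))*(6*q30*q12 - 2*q21^2)^2*(((9*q30*q03 - q21*q12)*(6*q30*q12 - 2*q21^2)*y + ((6*q30*q02 - q21*q11)*(6*q30*q12 - 2*q21^2) - (9*q30*q03 - q21*q12)*(3*q30*q11 - 2*q21*q20)))) + (q12*y^2+q11*y+q10)*(6*q30*q12 - 2*q21^2)^4) = 0 := by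
          intro y
          linear_combination (6*q30*q12 - 2*q21^2)^4*(hTpt y)
            - (2*(3*q30)*(((6*q30*q12 - 2*q21^2)*y+(3*q30*q11 - 2*q21*q20)))*(((9*q30*q03 - q21*q12)*(6*q30*q12 - 2*q21^2)*y + ((6*q30*q02 - q21*q11)*(6*q30*q12 - 2*q21^2) - (9*q30*q03 - q21*q12)*(3*q30*q11 - 2*q21*q20)))) + (3*q30)*((9*q30*q03 - q21*q12)*(3*q30*q11 - 2*q21*q20)^2 - (6*q30*q02 - q21*q11)*(6*q30*q12 - 2*q21^2)*(3*q30*q11 - 2*q21*q20) + (3*q30*q01 - q21*q10)*(6*q30*q12 - 2*q21^2)^2) - ((2*q21)*y+(2*q20))*(((6*q30*q12 - 2*q21^2)*y+(3*q30*q11 - 2*q21*q20)))*(6*q30*q12 - 2*q21^2)^2)*hE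
        have hWall : ∀ y : ℝ, (3*q30)*(((9*q30*q03 - q21*q12)*(6*q30*q12 - 2*q21^2)*y + ((6*q30*q02 - q21*q11)*(6*q30*q12 - 2*q21^2) - (9*q30*q03 - q21*q12)*(3*q30*q11 - 2*q21*q20))))^2
            - ((2*q21)*y+(2*q20))*(6*q30*q12 - 2*q21^2)^2*(((9*q30*q03 - q21*q12)*(6*q30*q12 - 2*q21^2)*y + ((6*q30*q02 - q21*q11)*(6*q30*q12 - 2*q21^2) - (9*q30*q03 - q21*q12)*(3*q30*q11 - 2*q21*q20)))) + (q12*y^2+q11*y+q10)*(6*q30*q12 - 2*q21^2)^4 = 0 := by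
          have hq := quad_all ((3*q30)*(9*q30*q03 - q21*q12)^2*(6*q30*q12 - 2*q21^2)^2 - (2*q21)*(6*q30*q12 - 2*q21^2)^3*(9*q30*q03 - q21*q12) + q12*(6*q30*q12 - 2*q21^2)^4)
            (2*(3*q30)*((9*q30*q03 - q21*q12)*(6*q30*q12 - 2*q21^2))*((6*q30*q02 - q21*q11)*(6*q30*q12 - 2*q21^2)-(9*q30*q03 - q21*q12)*(3*q30*q11 - 2*q21*q20)) - (2*q21)*(6*q30*q12 - 2*q21^2)^2*((6*q30*q02 - q21*q11)*(6*q30*q12 - 2*q21^2)-(9*q30*q03 - q21*q12)*(3*q30*q11 - 2*q21*q20))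
              - (2*q20)*(6*q30*q12 - 2*q21^2)^3*(9*q30*q03 - q21*q12) + q11*(6*q30*q12 - 2*q21^2)^4)
            ((3*q30)*((6*q30*q02 - q21*q11)*(6*q30*q12 - 2*q21^2)-(9*q30*q03 - q21*q12)*(3*q30*q11 - 2*q21*q20))^2 - (2*q20)*(6*q30*q12 - 2*q21^2)^2*((6*q30*q02 - q21*q11)*(6*q30*q12 - 2*q21^2)-(9*q30*q03 - q21*q12)*(3*q30*q11 - 2*q21*q20)) + q10*(6*q30*q12 - 2*q21^2)^4)
            (-((3*q30*q11 - 2*q21*q20)/(6*q30*q12 - 2*q21^2))) ?_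
          · intro y
            linear_combination hq y
          · intro y hy
            have hay : (6*q30*q12 - 2*q21^2)*y+(3*q30*q11 - 2*q21*q20) ≠ 0 := by
              intro h0
              apply hy
              rw [← neg_div, eq_div_iff ha1]
              linear_combination h0
            have h2 := hprod y
            rcases mul_eq_zero.1 h2 with h3 | h3
            · exact absurd (pow_eq_zero_iff two_ne_zero |>.1 h3) hay
            · linear_combination h3
        apply decomp_congr (Z2 :=
          {v : Pt | (6*q30*q12 - 2*q21^2)^2 * v 0 + (9*q30*q03 - q21*q12)*(6*q30*q12 - 2*q21^2) * v 1 = -((6*q30*q02 - q21*q11)*(6*q30*q12 - 2*q21^2) - (9*q30*q03 - q21*q12)*(3*q30*q11 - 2*q21*q20))} ∪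
          {v : Pt | v 1 = -((3*q30*q11 - 2*q21*q20)/(6*q30*q12 - 2*q21^2)) ∧
            (3*q30)*(v 0)^2 + ((2*q21)*(v 1)+(2*q20))*(v 0) + (q12*(v 1)^2+q11*(v 1)+q10) = 0})
        · ext v
          simp only [Set.mem_setOf_eq, Set.mem_union]
          constructor
          · rintro ⟨hG, hH⟩
            have hh := htilde q30 q21 q12 q03 q20 q11 q02 q10 q01 (v 0) (v 1) hG hH
            have hsplit : ((6*q30*q12 - 2*q21^2)*(v 1)+(3*q30*q11 - 2*q21*q20)) * ((6*q30*q12 - 2*q21^2)^2*(v 0) + ((9*q30*q03 - q21*q12)*(6*q30*q12 - 2*q21^2)*(v 1) + ((6*q30*q02 - q21*q11)*(6*q30*q12 - 2*q21^2) - (9*q30*q03 - q21*q12)*(3*q30*q11 - 2*q21*q20)))) = 0 := by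
              linear_combination (6*q30*q12 - 2*q21^2)^2*hh - hE
            rcases mul_eq_zero.1 hsplit with h3 | h3
            · right
              refine ⟨?_, by linear_combination hG⟩
              rw [← neg_div, eq_div_iff ha1]
              linear_combination h3
            · left
              linarith
          · intro h
            rcases h with h | ⟨hy, hGa⟩
            · have hx : (6*q30*q12 - 2*q21^2)^2*(v 0) + ((9*q30*q03 - q21*q12)*(6*q30*q12 - 2*q21^2)*(v 1) + ((6*q30*q02 - q21*q11)*(6*q30*q12 - 2*q21^2) - (9*q30*q03 - q21*q12)*(3*q30*q11 - 2*q21*q20))) = 0 := by linarith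
              have hG : 3*q30*(v 0)^2 + 2*q21*(v 0)*(v 1) + q12*(v 1)^2 + 2*q20*(v 0) + q11*(v 1) + q10 = 0 := by
                have h3 : (6*q30*q12 - 2*q21^2)^4*(3*q30*(v 0)^2 + 2*q21*(v 0)*(v 1) + q12*(v 1)^2 + 2*q20*(v 0) + q11*(v 1) + q10) = 0 := by
                  linear_combination hWall (v 1) + ((3*q30)*((6*q30*q12 - 2*q21^2)^2*(v 0) - (((9*q30*q03 - q21*q12)*(6*q30*q12 - 2*q21^2)*(v 1) + ((6*q30*q02 - q21*q11)*(6*q30*q12 - 2*q21^2) - (9*q30*q03 - q21*q12)*(3*q30*q11 - 2*q21*q20)))))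
                    + ((2*q21)*(v 1)+(2*q20))*(6*q30*q12 - 2*q21^2)^2)*hx
                rcases mul_eq_zero.1 h3 with h4 | h4
                · exact absurd (pow_eq_zero_iff (by norm_num : (4:ℕ) ≠ 0) |>.1 h4) ha1
                · exact h4
              have hh : ((6*q30*q12 - 2*q21^2)*(v 1)+(3*q30*q11 - 2*q21*q20))*(v 0) + ((9*q30*q03 - q21*q12)*(v 1)^2+(6*q30*q02 - q21*q11)*(v 1)+(3*q30*q01 - q21*q10)) = 0 := by
                have h5 : (6*q30*q12 - 2*q21^2)^2*(((6*q30*q12 - 2*q21^2)*(v 1)+(3*q30*q11 - 2*q21*q20))*(v 0) + ((9*q30*q03 - q21*q12)*(v 1)^2+(6*q30*q02 - q21*q11)*(v 1)+(3*q30*q01 - q21*q10))) = 0 := by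
                  linear_combination ((6*q30*q12 - 2*q21^2)*(v 1)+(3*q30*q11 - 2*q21*q20))*hx + hE
                rcases mul_eq_zero.1 h5 with h6 | h6
                · exact absurd (pow_eq_zero_iff two_ne_zero |>.1 h6) ha1
                · exact h6
              exact ⟨hG, Hfrom q30 q21 q12 q03 q20 q11 q02 q10 q01 (v 0) (v 1) hA hG hh⟩
            · have hG : 3*q30*(v 0)^2 + 2*q21*(v 0)*(v 1) + q12*(v 1)^2 + 2*q20*(v 0) + q11*(v 1) + q10 = 0 := by linear_combination hGa
              have hav : (6*q30*q12 - 2*q21^2)*(v 1)+(3*q30*q11 - 2*q21*q20) = 0 := by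
                rw [hy]
                field_simp
                ring
              have hh : ((6*q30*q12 - 2*q21^2)*(v 1)+(3*q30*q11 - 2*q21*q20))*(v 0) + ((9*q30*q03 - q21*q12)*(v 1)^2+(6*q30*q02 - q21*q11)*(v 1)+(3*q30*q01 - q21*q10)) = 0 := by
                have h5 : (6*q30*q12 - 2*q21^2)^2*(((6*q30*q12 - 2*q21^2)*(v 1)+(3*q30*q11 - 2*q21*q20))*(v 0) + ((9*q30*q03 - q21*q12)*(v 1)^2+(6*q30*q02 - q21*q11)*(v 1)+(3*q30*q01 - q21*q10))) = 0 := by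
                  linear_combination ((6*q30*q12 - 2*q21^2)^2*(v 0) + ((9*q30*q03 - q21*q12)*(6*q30*q12 - 2*q21^2)*(v 1) + ((6*q30*q02 - q21*q11)*(6*q30*q12 - 2*q21^2) - (9*q30*q03 - q21*q12)*(3*q30*q11 - 2*q21*q20))))*hav + hE
                rcases mul_eq_zero.1 h5 with h6 | h6
                · exact absurd (pow_eq_zero_iff two_ne_zero |>.1 h6) ha1
                · exact h6
              exact ⟨hG, Hfrom q30 q21 q12 q03 q20 q11 q02 q10 q01 (v 0) (v 1) hA hG hh⟩
        · refine decomp_union (decomp_line _ _ _) (decomp_finite ?_)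
          exact pt_finite (Q := fun y => y = -((3*q30*q11 - 2*q21*q20)/(6*q30*q12 - 2*q21^2)))
            (P := fun x y => (3*q30)*x^2 + ((2*q21)*y+(2*q20))*x + (q12*y^2+q11*y+q10) = 0)
            (by simp [Set.setOf_eq_eq_singleton]) 
            (fun y _ => quad_finite _ _ _ hA3')
  · -- nondegenerate resultant: finitely many critical points
    apply decomp_finite
    refine Set.Finite.subset (pt_finite
      (Q := fun y => ((3*q30)*(9*q30*q03 - q21*q12)*(9*q30*q03 - q21*q12) - (9*q30*q03 - q21*q12)*(6*q30*q12 - 2*q21^2)*(2*q21) + (6*q30*q12 - 2*q21^2)*(6*q30*q12 - 2*q21^2)*q12)*y^4 + (2*(3*q30)*(6*q30*q02 - q21*q11)*(9*q30*q03 - q21*q12) - (6*q30*q02 - q21*q11)*(6*q30*q12 - 2*q21^2)*(2*q21) - (9*q30*q03 - q21*q12)*(3*q30*q11 - 2*q21*q20)*(2*q21) - (9*q30*q03 - q21*q12)*(6*q30*q12 - 2*q21^2)*(2*q20) + 2*(3*q30*q11 - 2*q21*q20)*(6*q30*q12 - 2*q21^2)*q12 + (6*q30*q12 - 2*q21^2)*(6*q30*q12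 - 2*q21^2)*q11)*y^3 + (2*(3*q30)*(3*q30*q01 - q21*q10)*(9*q30*q03 - q21*q12) + (3*q30)*(6*q30*q02 - q21*q11)*(6*q30*q02 - q21*q11) - (3*q30*q01 - q21*q10)*(6*q30*q12 - 2*q21^2)*(2*q21) - (6*q30*q02 - q21*q11)*(3*q30*q11 - 2*q21*q20)*(2*q21) - (6*q30*q02 - q21*q11)*(6*q30*q12 - 2*q21^2)*(2*q20) - (9*q30*q03 - q21*q12)*(3*q30*q11 - 2*q21*q20)*(2*q20) + (3*q30*q11 - 2*q21*q20)*(3*q30*q11 - 2*q21*q20)*q12 + 2*(3*q30*q11 - 2*q21*q20)*(6*q30*q12 - 2*q21^2)*q11 + (6*q30*q12 - 2*q21^2)*(6*q30*q12 - 2*q21^2)*q10)*y^2 + (2*(3*q30)*(3*q30*q01 - q21*q10)*(6*q30*q02 - q21*q11) - (3*q30*q01 - q21*q10)*(3*q30*q11 - 2*q21*q20)*(2*q21) - (3*q30*q01 - q21*q10)*(6*q30*q12 - 2*q21^2)*(2*q20) - (6*q30*q02 - q21*q11)*(3*q30*q11 - 2*q21*q20)*(2*q20) + (3*q30*q11 -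 2*q21*q20)*(3*q30*q11 - 2*q21*q20)*q11 + 2*(3*q30*q11 - 2*q21*q20)*(6*q30*q12 - 2*q21^2)*q10)*y + ((3*q30)*(3*q30*q01 - q21*q10)*(3*q30*q01 - q21*q10) - (3*q30*q01 - q21*q10)*(3*q30*q11 - 2*q21*q20)*(2*q20) + (3*q30*q11 - 2*q21*q20)*(3*q30*q11 - 2*q21*q20)*q10) = 0)
      (P := fun x y => (3*q30)*x^2 + ((2*q21)*y+(2*q20))*x + (q12*y^2+q11*y+q10) = 0)
      (quartic_finite _ _ _ _ _ hT) (fun y _ => quad_finite _ _ _ hA3')) ?_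
    rintro v ⟨hG, hH⟩
    have hh := htilde q30 q21 q12 q03 q20 q11 q02 q10 q01 (v 0) (v 1) hG hH
    have hT0 := TfromGh (3*q30) (2*q21) (2*q20) q12 q11 q10 (6*q30*q12 - 2*q21^2) (3*q30*q11 - 2*q21*q20) (9*q30*q03 - q21*q12) (6*q30*q02 - q21*q11) (3*q30*q01 - q21*q10) (v 0) (v 1) (by linear_combination hG) hh
    have hTc := Tcoeff (3*q30) (2*q21) (2*q20) q12 q11 q10 (6*q30*q12 - 2*q21^2) (3*q30*q11 - 2*q21*q20) (9*q30*q03 - q21*q12) (6*q30*q02 - q21*q11) (3*q30*q01 - q21*q10) (v 1)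
    exact ⟨by linear_combination hT0 - hTc, by linear_combination hG⟩




noncomputable def shear (t : ℝ) : Pt →ₗ[ℝ] Pt :=
  LinearMap.pi ![LinearMap.proj 0, LinearMap.proj 1 - t • LinearMap.proj 0]

lemma shear_apply0 (t : ℝ) (v : Pt) : shear t v 0 = v 0 := rfl
lemma shear_apply1 (t : ℝ) (v : Pt) : shear t v 1 = v 1 - t * v 0 := rfl

lemma two_lines_eq (p1 r1 s1 p2 r2 s2 : ℝ) :
    {v : Pt | p1*v 0 + r1*v 1 = s1 ∧ p2*v 0 + r2*v 1 = s2}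
      = (((AffineSubspace.comap (lform p1 r1).toAffineMap
            (AffineSubspace.mk' s1 (⊥ : Submodule ℝ ℝ)))
          ⊓ (AffineSubspace.comap (lform p2 r2).toAffineMap
            (AffineSubspace.mk' s2 (⊥ : Submodule ℝ ℝ))) : AffineSubspace ℝ Pt) : Set Pt) := by
  ext v
  simp only [Set.mem_setOf_eq, AffineSubspace.mem_coe, AffineSubspace.mem_inf_iff,
    AffineSubspace.mem_comap, AffineSubspace.mem_mk', Submodule.mem_bot,
    vsub_eq_sub, sub_eq_zero, LinearMap.coe_toAffineMap, Set.inf_eq_inter,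
    Set.mem_inter_iff]
  rfl




open MvPolynomial Finsupp

lemma single_add_single_apply0 (i j : ℕ) :
    (Finsupp.single (0 : Fin 2) i + Finsupp.single (1 : Fin 2) j) 0 = i := by
  simp [Finsupp.single_apply]

lemma single_add_single_apply1 (i j : ℕ) :
    (Finsupp.single (0 : Fin 2) i + Finsupp.single (1 : Fin 2) j) 1 = j := by
  simp [Finsupp.single_apply]

lemma single_sum (m : Fin 2 →₀ ℕ) : m.sum (fun _ e => e) = m 0 + m 1 := by
  rw [Finsupp.sum_fintype]
  · exact Fin.sum_univ_two m
  · intro _; rfl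

lemma eval_monomial_two (i j : ℕ) (c : ℝ) (v : Pt) :
    eval v (monomial (Finsupp.single 0 i + Finsupp.single 1 j) c)
      = c * (v 0)^i * (v 1)^j := by
  rw [MvPolynomial.eval_monomial]
  rw [Finsupp.prod_add_index' (fun k => pow_zero (v k)) (fun k a b => pow_add (v k) a b)]
  simp [Finsupp.prod_single_index]
  ring

lemma sub_single0 (i j : ℕ) :
    (Finsupp.single (0 : Fin 2) i + Finsupp.single 1 j) - Finsupp.single 0 1
      = Finsupp.single 0 (i - 1) + Finsupp.single 1 j := by
  ext k
  fin_cases k <;> simp [Finsupp.single_apply]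

lemma sub_single1 (i j : ℕ) :
    (Finsupp.single (0 : Fin 2) i + Finsupp.single 1 j) - Finsupp.single 1 1
      = Finsupp.single 0 i + Finsupp.single 1 (j - 1) := by
  ext k
  fin_cases k <;> simp [Finsupp.single_apply]

lemma eval_pderiv_monomial0 (i j : ℕ) (c : ℝ) (v : Pt) :
    eval v (pderiv 0 (monomial (Finsupp.single 0 i + Finsupp.single 1 j) c))
      = c * i * (v 0)^(i-1) * (v 1)^j := by
  rw [MvPolynomial.pderiv_monomial, single_add_single_apply0, sub_single0, eval_monomial_two]

lemma eval_pderiv_monomial1 (i j : ℕ) (c : ℝ) (v : Pt) :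
    eval v (pderiv 1 (monomial (Finsupp.single 0 i + Finsupp.single 1 j) c))
      = c * j * (v 0)^i * (v 1)^(j-1) := by
  rw [MvPolynomial.pderiv_monomial, single_add_single_apply1, sub_single1, eval_monomial_two]



open MvPolynomial Finsupp

noncomputable def dd (i j : ℕ) : Fin 2 →₀ ℕ := Finsupp.single 0 i + Finsupp.single 1 j

lemma dd_apply0 (i j : ℕ) : dd i j 0 = i := single_add_single_apply0 i j
lemma dd_apply1 (i j : ℕ) : dd i j 1 = j := single_add_single_apply1 i j

lemma coeff_zero_of_deg (f : MvPolynomial (Fin 2) ℝ) (hdeg : f.totalDegree ≤ 3)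
    (i j : ℕ) (hij : 3 < i + j) : coeff (dd i j) f = 0 := by
  by_contra hne
  have hm : dd i j ∈ f.support := MvPolynomial.mem_support_iff.2 hne
  have h := MvPolynomial.le_totalDegree hm
  rw [single_sum, dd_apply0, dd_apply1] at h
  omega

lemma f_as_sum (f : MvPolynomial (Fin 2) ℝ) (hdeg : f.totalDegree ≤ 3) :
    f = ∑ p ∈ Finset.range 4 ×ˢ Finset.range 4, monomial (dd p.1 p.2) (coeff (dd p.1 p.2) f) := by
  have hinj : ∀ p ∈ Finset.range 4 ×ˢ Finset.range 4, ∀ q ∈ Finset.range 4 ×ˢ Finset.range 4,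
      dd p.1 p.2 = dd q.1 q.2 → p = q := by
    intro p _ q _ h
    have h0 := congrArg (fun g => g 0) h
    have h1 := congrArg (fun g => g 1) h
    simp only [dd_apply0, dd_apply1] at h0 h1
    exact Prod.ext h0 h1
  have hsub : f.support ⊆ (Finset.range 4 ×ˢ Finset.range 4).image (fun p => dd p.1 p.2) := by
    intro m hm
    have h := MvPolynomial.le_totalDegree hm
    rw [single_sum] at h
    have h3 : m 0 + m 1 ≤ 3 := le_trans h hdeg
    refine Finset.mem_image.2 ⟨(m 0, m 1), ?_, ?_⟩
    · simp only [Finset.mem_product, Finset.mem_range]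
      omega
    · ext k
      fin_cases k
      · simpa using dd_apply0 (m 0) (m 1)
      · simpa using dd_apply1 (m 0) (m 1)
  conv_lhs => rw [f.as_sum]
  calc ∑ d ∈ f.support, monomial d (coeff d f)
      = ∑ d ∈ (Finset.range 4 ×ˢ Finset.range 4).image (fun p => dd p.1 p.2),
          monomial d (coeff d f) := by
        refine Finset.sum_subset hsub ?_
        intro d _ hd
        rw [MvPolynomial.notMem_support_iff.1 hd, map_zero]
    _ = ∑ p ∈ Finset.range 4 ×ˢ Finset.range 4,
          monomial (dd p.1 p.2) (coeff (dd p.1 p.2) f) := by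
        rw [Finset.sum_image hinj]

lemma eval_pderiv0 (f : MvPolynomial (Fin 2) ℝ) (hdeg : f.totalDegree ≤ 3) (v : Pt) :
    eval v (pderiv 0 f)
      = 3*(coeff (dd 3 0) f)*(v 0)^2 + 2*(coeff (dd 2 1) f)*(v 0)*(v 1)
        + (coeff (dd 1 2) f)*(v 1)^2 + 2*(coeff (dd 2 0) f)*(v 0)
        + (coeff (dd 1 1) f)*(v 1) + (coeff (dd 1 0) f) := by
  conv_lhs => rw [f_as_sum f hdeg]
  rw [map_sum, map_sum]
  rw [Finset.sum_product]
  simp only [dd, eval_pderiv_monomial0]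
  simp only [Finset.sum_range_succ, Finset.sum_range_zero]
  have z22 := coeff_zero_of_deg f hdeg 2 2 (by norm_num)
  have z23 := coeff_zero_of_deg f hdeg 2 3 (by norm_num)
  have z31 := coeff_zero_of_deg f hdeg 3 1 (by norm_num)
  have z32 := coeff_zero_of_deg f hdeg 3 2 (by norm_num)
  have z33 := coeff_zero_of_deg f hdeg 3 3 (by norm_num)
  have z13 := coeff_zero_of_deg f hdeg 1 3 (by norm_num)
  simp only [dd] at z22 z23 z31 z32 z33 z13
  rw [z22, z23, z31, z32, z33, z13]
  norm_num
  ring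

lemma eval_pderiv1 (f : MvPolynomial (Fin 2) ℝ) (hdeg : f.totalDegree ≤ 3) (v : Pt) :
    eval v (pderiv 1 f)
      = (coeff (dd 2 1) f)*(v 0)^2 + 2*(coeff (dd 1 2) f)*(v 0)*(v 1)
        + 3*(coeff (dd 0 3) f)*(v 1)^2 + (coeff (dd 1 1) f)*(v 0)
        + 2*(coeff (dd 0 2) f)*(v 1) + (coeff (dd 0 1) f) := by
  conv_lhs => rw [f_as_sum f hdeg]
  rw [map_sum, map_sum]
  rw [Finset.sum_product]
  simp only [dd, eval_pderiv_monomial1]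
  simp only [Finset.sum_range_succ, Finset.sum_range_zero]
  have z22 := coeff_zero_of_deg f hdeg 2 2 (by norm_num)
  have z23 := coeff_zero_of_deg f hdeg 2 3 (by norm_num)
  have z31 := coeff_zero_of_deg f hdeg 3 1 (by norm_num)
  have z32 := coeff_zero_of_deg f hdeg 3 2 (by norm_num)
  have z33 := coeff_zero_of_deg f hdeg 3 3 (by norm_num)
  have z13 := coeff_zero_of_deg f hdeg 1 3 (by norm_num)
  simp only [dd] at z22 z23 z31 z32 z33 z13
  rw [z22, z23, z31, z32, z33, z13]
  norm_num
  ring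


lemma decomp_two_lines (p1 r1 s1 p2 r2 s2 : ℝ) :
    decomp {v : Pt | p1*v 0 + r1*v 1 = s1 ∧ p2*v 0 + r2*v 1 = s2} := by
  rw [two_lines_eq]
  exact decomp_sub _

lemma main (q30 q21 q12 q03 q20 q11 q02 q10 q01 : ℝ) :
    decomp {v : Pt | 3*q30*(v 0)^2 + 2*q21*(v 0)*(v 1) + q12*(v 1)^2 + 2*q20*(v 0) + q11*(v 1) + q10 = 0 ∧ q21*(v 0)^2 + 2*q12*(v 0)*(v 1) + 3*q03*(v 1)^2 + q11*(v 0) + 2*q02*(v 1) + q01 = 0} := by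
  by_cases hcub : q30 = 0 ∧ q21 = 0 ∧ q12 = 0 ∧ q03 = 0
  · obtain ⟨h30, h21, h12, h03⟩ := hcub
    apply decomp_congr
      (Z2 := {v : Pt | 2*q20*v 0 + q11*v 1 = -q10 ∧ q11*v 0 + 2*q02*v 1 = -q01})
    · ext v
      simp only [Set.mem_setOf_eq]
      constructor
      · rintro ⟨h1, h2⟩
        constructor
        · linear_combination h1 - 3*(v 0)^2*h30 - 2*(v 0)*(v 1)*h21 - (v 1)^2*h12
        · linear_combination h2 - (v 0)^2*h21 - 2*(v 0)*(v 1)*h12 - 3*(v 1)^2*h03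
      · rintro ⟨h1, h2⟩
        constructor
        · linear_combination h1 + 3*(v 0)^2*h30 + 2*(v 0)*(v 1)*h21 + (v 1)^2*h12
        · linear_combination h2 + (v 0)^2*h21 + 2*(v 0)*(v 1)*h12 + 3*(v 1)^2*h03
    · exact decomp_two_lines _ _ _ _ _ _
  · obtain ⟨t, ht⟩ := cubic_exists q30 q21 q12 q03 hcub
    have hd := mainA (q30 + q21*t + q12*t^2 + q03*t^3) (q21 + 2*q12*t + 3*q03*t^2)
      (q12 + 3*q03*t) q03 (q20 + q11*t + q02*t^2) (q11 + 2*q02*t) q02 (q10 + q01*t) q01 ht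
    apply decomp_congr (Z2 := (shear t).toAffineMap ⁻¹'
      {v : Pt | 3*(q30 + q21*t + q12*t^2 + q03*t^3)*(v 0)^2 + 2*(q21 + 2*q12*t + 3*q03*t^2)*(v 0)*(v 1) + (q12 + 3*q03*t)*(v 1)^2 + 2*(q20 + q11*t + q02*t^2)*(v 0) + (q11 + 2*q02*t)*(v 1) + (q10 + q01*t) = 0 ∧ (q21 + 2*q12*t + 3*q03*t^2)*(v 0)^2 + 2*(q12 + 3*q03*t)*(v 0)*(v 1) + 3*q03*(v 1)^2 + (q11 + 2*q02*t)*(v 0) + 2*q02*(v 1) + q01 = 0})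
    · ext v
      simp only [Set.mem_preimage, LinearMap.coe_toAffineMap, Set.mem_setOf_eq,
        shear_apply0, shear_apply1]
      constructor
      · rintro ⟨h1, h2⟩
        exact ⟨by linear_combination h1 + t*h2, by linear_combination h2⟩
      · rintro ⟨h1, h2⟩
        exact ⟨by linear_combination h1 - t*h2, by linear_combination h2⟩
    · exact decomp_preimage _ hd

end Stmt1Aux

open MvPolynomial Stmt1Aux in
theorem stmt_1 (f : MvPolynomial (Fin 2) ℝ) (hdeg : f.totalDegree ≤ 3) :
    ∃ (k : ℕ) (A : Fin k → AffineSubspace ℝ (Fin 2 → ℝ)),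
      {x : Fin 2 → ℝ | ∀ i : Fin 2, MvPolynomial.eval x (MvPolynomial.pderiv i f) = 0} =
        ⋃ i, (A i : Set (Fin 2 → ℝ)) := by
  have hmain := main (coeff (dd 3 0) f) (coeff (dd 2 1) f) (coeff (dd 1 2) f)
    (coeff (dd 0 3) f) (coeff (dd 2 0) f) (coeff (dd 1 1) f) (coeff (dd 0 2) f)
    (coeff (dd 1 0) f) (coeff (dd 0 1) f)
  obtain ⟨k, A, hA⟩ := hmain
  refine ⟨k, A, ?_⟩
  rw [← hA]
  ext v
  simp only [Set.mem_setOf_eq, Fin.forall_fin_two]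
  rw [eval_pderiv0 f hdeg v, eval_pderiv1 f hdeg v]
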